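/- Let k ≥ 2. Define k×k matrices over ℝ: h₀ with (h₀)_{0,k−1} = 1, (h₀)_{j+1,j} = 1 for 0 ≤ j ≤ k−2, all other entries 0; h∞ with (h∞)_{i,0} = (−1)^i·binomial(k, i+1) for 0 ≤ i ≤ k−1, (h∞)_{i,i+1} = 1 for 0 ≤ i ≤ k−2, all other entries 0. Then the real vector space of k×k real matrices X satisfying h₀ · X · h₀ᵀ = X and h∞ · X · h∞ᵀ = X (the space of quadratic invariants of the hypergeometric group generated by h₀ and h∞) has dimension at most 1. -/

import Mathlib

open Matrix

/-- The space of quadratic invariants of the group generated by `h₀` and `hinf`: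
real `k × k` matrices `X` with `h₀ * X * h₀ᵀ = X` and `hinf * X * hinfᵀ = X`. -/
def quadraticInvariants (k : ℕ) (h₀ hinf : Matrix (Fin k) (Fin k) ℝ) :
    Submodule ℝ (Matrix (Fin k) (Fin k) ℝ) where
  carrier := {X | h₀ * X * h₀ᵀ = X ∧ hinf * X * hinfᵀ = X}
  add_mem' := by
    rintro X Y ⟨hX0, hXinf⟩ ⟨hY0, hYinf⟩
    constructor <;>
      simp [Matrix.mul_add, Matrix.add_mul, hX0, hXinf, hY0, hYinf]
  zero_mem' := by simp
  smul_mem' := by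
    rintro c X ⟨hX0, hXinf⟩
    constructor <;>
      simp [Matrix.mul_smul, Matrix.smul_mul, hX0, hXinf]

/-- For `k ≥ 2`, with `h₀`, `hinf` the monodromy matrices of the hypergeometric
equation, the real vector space of `k × k` real matrices `X` satisfying
`h₀ * X * h₀ᵀ = X` and `hinf * X * hinfᵀ = X` has dimension at most `1`. -/
theorem stmt5 (k : ℕ) (hk : 2 ≤ k)
    (h₀ hinf : Matrix (Fin k) (Fin k) ℝ)
    (hd0 : h₀ = Matrix.of fun i j : Fin k =>
      if (i : ℕ) = (j : ℕ) + 1 then 1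
      else if (i : ℕ) = 0 ∧ (j : ℕ) = k - 1 then 1 else 0)
    (hdinf : hinf = Matrix.of fun i j : Fin k =>
      if (j : ℕ) = 0 then (-1) ^ (i : ℕ) * (k.choose ((i : ℕ) + 1) : ℝ)
      else if (j : ℕ) = (i : ℕ) + 1 then 1 else 0) :
    Module.rank ℝ (quadraticInvariants k h₀ hinf) ≤ 1 := by
  haveI : NeZero k := ⟨by omega⟩
  set v : Fin k → ℝ := fun i => (-1) ^ (i : ℕ) * (k.choose ((i : ℕ) + 1) : ℝ) with hv
  have hvne : ∀ i : Fin k, v i ≠ 0 := by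
    intro i
    exact mul_ne_zero (pow_ne_zero _ (by norm_num))
      (Nat.cast_ne_zero.2 (Nat.choose_pos (by omega : (i:ℕ) + 1 ≤ k)).ne')
  have hone : ((1 : Fin k) : ℕ) = 1 := by
    rw [Fin.val_one']; exact Nat.mod_eq_of_lt (by omega)
  have hd0' : ∀ a b : Fin k, h₀ a b = if a = b + 1 then (1:ℝ) else 0 := by
    intro a b
    have ha := a.isLt; have hb := b.isLt
    have hab : ((b + 1 : Fin k) : ℕ) = ((b:ℕ) + 1) % k := by rw [Fin.val_add, hone]
    rw [hd0]
    simp only [Matrix.of_apply, Fin.ext_iff, hab]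
    by_cases hbk : (b : ℕ) = k - 1
    · have h1 : ((b:ℕ) + 1) % k = 0 := by
        have : (b:ℕ) + 1 = k := by omega
        rw [this, Nat.mod_self]
      rw [h1]; split_ifs <;> first | rfl | omega
    · have h1 : ((b:ℕ) + 1) % k = (b:ℕ) + 1 := Nat.mod_eq_of_lt (by omega)
      rw [h1]; split_ifs <;> first | rfl | omega
  have hdinf' : ∀ i a : Fin k, hinf i a =
      if a = 0 then v i else if (a:ℕ) = (i:ℕ) + 1 then 1 else 0 := by
    intro i a
    rw [hdinf]
    simp only [Matrix.of_apply, hv]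
    congr 1
    exact propext ⟨fun h => Fin.ext (by rw [h]; simp), fun h => by simp [h]⟩
  -- row sums against h₀
  have rsum0 : ∀ (a : Fin k) (f : Fin k → ℝ), (∑ d, h₀ a d * f d) = f (a - 1) := by
    intro a f
    have : ∀ d : Fin k, h₀ a d * f d = if d = a - 1 then f d else 0 := by
      intro d
      rw [hd0']
      by_cases h : d = a - 1
      · subst h; rw [if_pos rfl, if_pos (by rw [sub_add_cancel]), one_mul]
      · rw [if_neg h, if_neg, zero_mul]
        intro hh
        exact h (by rw [hh, add_sub_cancel_right])
    rw [Finset.sum_congr rfl (fun d _ => this d), Finset.sum_ite_eq']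
    simp
  -- shift invariance
  suffices key : ∀ X : Matrix (Fin k) (Fin k) ℝ, h₀ * X * h₀ᵀ = X → hinf * X * hinfᵀ = X →
      X 0 1 = 0 → X = 0 by
    let φ : quadraticInvariants k h₀ hinf →ₗ[ℝ] ℝ :=
      { toFun := fun Y => (Y : Matrix (Fin k) (Fin k) ℝ) 0 1
        map_add' := fun Y Z => rfl
        map_smul' := fun c Y => rfl }
    have hφ : Function.Injective φ := by
      rw [injective_iff_map_eq_zero]
      intro Y hY
      obtain ⟨hY0, hYinf⟩ := Y.2
      exact Subtype.ext (key _ hY0 hYinf hY)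
    calc Module.rank ℝ (quadraticInvariants k h₀ hinf) ≤ Module.rank ℝ ℝ :=
        LinearMap.rank_le_of_injective φ hφ
      _ = 1 := Module.rank_self ℝ
  intro X hX0 hXinf hc1
  have hshift : ∀ i j : Fin k, X i j = X (i + 1) (j + 1) := by
    intro i j
    have h1 := congrFun (congrFun hX0 (i + 1)) (j + 1)
    rw [Matrix.mul_apply] at h1
    have h2 : ∀ c : Fin k, (h₀ * X) (i+1) c * h₀ᵀ c (j+1) = h₀ (j+1) c * (h₀ * X) (i+1) c := by
      intro c; rw [Matrix.transpose_apply, mul_comm]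
    rw [Finset.sum_congr rfl (fun c _ => h2 c), rsum0] at h1
    rw [Matrix.mul_apply, rsum0, add_sub_cancel_right, add_sub_cancel_right] at h1
    exact h1
  open Fin.NatCast in
  have circ : ∀ i j : Fin k, X i j = X 0 (j - i) := by
    have aux : ∀ (n : ℕ) (j : Fin k), X 0 j = X (n : Fin k) (j + (n : Fin k)) := by
      intro n
      induction n with
      | zero => simp
      | succ n ih =>
        intro j
        rw [ih j, hshift]
        congr 1 <;> simp only [Nat.cast_succ, add_assoc]
    intro i j
    have h := aux (i : ℕ) (j - i)
    rw [Fin.cast_val_eq_self, sub_add_cancel] at h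
    exact h.symm
  -- hinf row sums
  let il : Fin k := ⟨k - 1, by omega⟩
  let i2 : Fin k := ⟨k - 2, by omega⟩
  have S1 : ∀ (i : Fin k), (i : ℕ) < k - 1 → ∀ f : Fin k → ℝ,
      (∑ b, hinf i b * f b) = v i * f 0 + f (i + 1) := by
    intro i hi f
    have hi1 : ((i + 1 : Fin k) : ℕ) = (i : ℕ) + 1 := by
      rw [Fin.val_add, hone]; exact Nat.mod_eq_of_lt (by omega)
    have h10 : (i + 1 : Fin k) ≠ 0 := by
      intro h
      have := congrArg Fin.val h
      rw [hi1, Fin.val_zero] at this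
      omega
    have hterm : ∀ b : Fin k, hinf i b * f b =
        (if b = 0 then v i * f b else 0) + (if b = i + 1 then f b else 0) := by
      intro b
      rw [hdinf']
      by_cases hb0 : b = 0
      · subst hb0
        rw [if_pos rfl, if_pos rfl, if_neg (fun h => h10 h.symm), add_zero]
      · rw [if_neg hb0, if_neg hb0]
        by_cases hb1 : b = i + 1
        · subst hb1
          rw [if_pos hi1, if_pos rfl, one_mul, zero_add]
        · rw [if_neg (fun h => hb1 (by rw [Fin.ext_iff, hi1]; exact h)), if_neg hb1,
            zero_mul, add_zero]
    rw [Finset.sum_congr rfl (fun b _ => hterm b), Finset.sum_add_distrib,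
      Finset.sum_ite_eq', Finset.sum_ite_eq']
    simp
  have S2 : ∀ f : Fin k → ℝ, (∑ b, hinf il b * f b) = v il * f 0 := by
    intro f
    have hterm : ∀ b : Fin k, hinf il b * f b = if b = 0 then v il * f b else 0 := by
      intro b
      rw [hdinf']
      by_cases hb0 : b = 0
      · subst hb0; rw [if_pos rfl, if_pos rfl]
      · rw [if_neg hb0, if_neg hb0, if_neg, zero_mul]
        have := b.isLt
        show ¬ (b : ℕ) = (il : ℕ) + 1
        simp only [il]
        omega
    rw [Finset.sum_congr rfl (fun b _ => hterm b), Finset.sum_ite_eq']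
    simp
  -- Fin arithmetic facts
  have f_i2 : i2 + 1 = il := by
    rw [Fin.ext_iff, Fin.val_add, hone]
    show (k - 2 + 1) % k = k - 1
    rw [Nat.mod_eq_of_lt (by omega)]; omega
  have f_last1 : il + 1 = 0 := by
    rw [Fin.ext_iff, Fin.val_add, hone, Fin.val_zero]
    show (k - 1 + 1) % k = 0
    rw [show k - 1 + 1 = k by omega, Nat.mod_self]
  have hnegl : -il = 1 := neg_eq_of_add_eq_zero_right f_last1
  have hnegi2 : -i2 = 1 + 1 := by
    have h2 : i2 = il - 1 := eq_sub_of_add_eq f_i2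
    rw [h2, neg_sub, sub_eq_add_neg, hnegl]
  have h0lt : ((0 : Fin k) : ℕ) < k - 1 := by rw [Fin.val_zero]; omega
  -- products with hinf
  have mull : ∀ b : Fin k, (hinf * X) il b = v il * X 0 b := by
    intro b; rw [Matrix.mul_apply]; exact S2 (fun a => X a b)
  have mul2 : ∀ b : Fin k, (hinf * X) i2 b = v i2 * X 0 b + X il b := by
    intro b
    rw [Matrix.mul_apply]
    have := S1 i2 (by show k - 2 < k - 1; omega) (fun a => X a b)
    rw [f_i2] at this
    exact this
  have circl : ∀ b : Fin k, X il b = X 0 (b + 1) := by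
    intro b; rw [circ, sub_eq_add_neg, hnegl]
  -- first equation: entry (il, 0)
  have hc0 : X 0 0 = 0 := by
    have e1 := congrFun (congrFun hXinf il) 0
    rw [Matrix.mul_apply] at e1
    have hcomm : ∀ b : Fin k, (hinf * X) il b * hinfᵀ b 0 = hinf 0 b * ((hinf * X) il b) := by
      intro b; rw [Matrix.transpose_apply, mul_comm]
    rw [Finset.sum_congr rfl (fun b _ => hcomm b), S1 0 h0lt, mull, mull, zero_add,
      circl, zero_add, hc1, mul_zero, add_zero] at e1
    have := mul_eq_zero.1 e1
    rcases this with h | h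
    · exact absurd h (hvne 0)
    · rcases mul_eq_zero.1 h with h' | h'
      · exact absurd h' (hvne il)
      · exact h'
  -- second family: entry (i2, j) for j < k-1
  have hcs : ∀ j : Fin k, (j : ℕ) < k - 1 → X 0 (j + 1) = 0 := by
    intro j hj
    have e2 := congrFun (congrFun hXinf i2) j
    rw [Matrix.mul_apply] at e2
    have hcomm : ∀ b : Fin k, (hinf * X) i2 b * hinfᵀ b j = hinf j b * ((hinf * X) i2 b) := by
      intro b; rw [Matrix.transpose_apply, mul_comm]
    rw [Finset.sum_congr rfl (fun b _ => hcomm b), S1 j hj, mul2, mul2,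
      circl, circl, zero_add, hc0, hc1, mul_zero, zero_add, mul_zero, zero_add] at e2
    rw [circ i2 j, sub_eq_add_neg, hnegi2, ← add_assoc] at e2
    have : v i2 * X 0 (j + 1) = 0 := by linarith [e2]
    rcases mul_eq_zero.1 this with h | h
    · exact absurd h (hvne i2)
    · exact h
  -- conclude
  ext i j
  rw [circ]
  set n := j - i with hn
  by_cases hn0 : n = 0
  · rw [hn0]; exact hc0
  · have hnv : 1 ≤ (n : ℕ) := by
      rcases Nat.eq_zero_or_pos (n : ℕ) with h | h
      · exact absurd (Fin.ext_iff.2 (by rw [h, Fin.val_zero])) hn0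
      · exact h
    have hnlt := n.isLt
    have hj' : ((n - 1 : Fin k) : ℕ) = (n : ℕ) - 1 := by
      rw [Fin.sub_def]
      show (k - ((1 : Fin k) : ℕ) + (n : ℕ)) % k = (n : ℕ) - 1
      rw [hone, show k - 1 + (n : ℕ) = k + ((n : ℕ) - 1) by omega,
        Nat.add_mod_left, Nat.mod_eq_of_lt (by omega)]
    have := hcs (n - 1) (by rw [hj']; omega)
    rwa [sub_add_cancel] at this
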